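/- For the metric ds² = dη² + du² + α² sin²η dξ₁² + cos²η dξ₂² (α > 0 constant, 0 < η < π/2), the torus surfaces of constant (η,u) with unit normals n = ∂_η, m = ∂_u have second fundamental forms satisfying K² − K_{ab}K^{ab} = −2 and L_{ab} = 0; in particular this quantity is independent of the cone parameter α. -/

import Mathlib

noncomputable section

open Real

/-- Diagonal entries of the conical metric
`ds² = dη² + du² + α² sin²η dξ₁² + cos²η dξ₂²` in the coordinates
`x⁰ = η, x¹ = u, x² = ξ₁, x³ = ξ₂`. -/
def diagEntry (α : ℝ) : Fin 4 → ℝ → ℝ :=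
  ![fun _ => 1, fun _ => 1, fun η => α ^ 2 * Real.sin η ^ 2, fun η => Real.cos η ^ 2]

/-- Metric components `g_{ab}` (diagonal, depending only on `η`). -/
def metricComp (α : ℝ) (a b : Fin 4) : ℝ → ℝ :=
  if a = b then diagEntry α a else fun _ => 0

/-- Partial derivative `∂ᵢ` acting on functions of `η = x⁰` alone. -/
def Dpart (i : Fin 4) (h : ℝ → ℝ) : ℝ → ℝ :=
  if i = 0 then deriv h else fun _ => 0

/-- Christoffel symbols of the diagonal metric. -/
def Gamma (α : ℝ) (k i j : Fin 4) (η : ℝ) : ℝ :=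
  (1 / 2) * (diagEntry α k η)⁻¹ *
    (Dpart i (metricComp α j k) η + Dpart j (metricComp α i k) η
      - Dpart k (metricComp α i j) η)

/-- Second fundamental form of the torus `{η = const, u = const}` with respect to the
constant unit normal `∂/∂x^c` (`c = 0` gives `n = ∂_η`, `c = 1` gives `m = ∂_u`):
`K_{ab} = ⟨∇_{∂_a} ∂_c, ∂_b⟩ = Γᵏ_{a c} g_{kb}`. -/
def secondFF (α : ℝ) (c a b : Fin 4) (η : ℝ) : ℝ :=
  ∑ k : Fin 4, Gamma α k a c η * metricComp α k b η

/-- Inverse of the induced metric on the torus (supported on the tangent indices 2, 3). -/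
def hUp (α : ℝ) (a b : Fin 4) (η : ℝ) : ℝ :=
  if a = b ∧ (a = 2 ∨ a = 3) then (diagEntry α a η)⁻¹ else 0

/-- Mean curvature `K = h^{ab} K_{ab}` with respect to the normal `∂/∂x^c`. -/
def meanCurv (α : ℝ) (c : Fin 4) (η : ℝ) : ℝ :=
  ∑ a : Fin 4, ∑ b : Fin 4, hUp α a b η * secondFF α c a b η

lemma dconst' : deriv (fun _ : ℝ => (1:ℝ)) = fun _ => 0 := by funext x; simp
lemma dzero' : deriv (fun _ : ℝ => (0:ℝ)) = fun _ => 0 := by funext x; simp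

lemma d2' (α x : ℝ) : deriv (fun η => α ^ 2 * Real.sin η ^ 2) x
    = α ^ 2 * (2 * Real.sin x * Real.cos x) := by
  have h := (((Real.hasDerivAt_sin x).pow 2).const_mul (α ^ 2)).deriv
  rw [show (fun η => α ^ 2 * Real.sin η ^ 2) = (fun y => α ^ 2 * (Real.sin ^ 2) y) from rfl, h]; push_cast; ring

lemma d3' (x : ℝ) : deriv (fun η => Real.cos η ^ 2) x
    = -(2 * Real.sin x * Real.cos x) := by
  have h := ((Real.hasDerivAt_cos x).pow 2).deriv
  rw [show (fun η => Real.cos η ^ 2) = Real.cos ^ 2 from rfl, h]; push_cast; ring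

/-- For the metric `ds² = dη² + du² + α² sin²η dξ₁² + cos²η dξ₂²` (`α > 0` constant,
`0 < η < π/2`), the torus surfaces of constant `(η,u)` with unit normals `n = ∂_η`,
`m = ∂_u` satisfy `K² − K_{ab}K^{ab} = −2` and `L_{ab} = 0`; in particular this quantity
is independent of the cone parameter `α`. -/
theorem stmt_19 (α : ℝ) (hα : 0 < α) :
    ∀ η ∈ Set.Ioo 0 (π / 2),
      (meanCurv α 0 η ^ 2 -
        ∑ a : Fin 4, ∑ b : Fin 4, ∑ c : Fin 4, ∑ d : Fin 4,
          hUp α a c η * hUp α b d η * secondFF α 0 a b η * secondFF α 0 c d η) = -2 ∧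
      (∀ a b : Fin 4, secondFF α 1 a b η = 0) := by
  rintro η ⟨h1, h2⟩
  have hs : Real.sin η ≠ 0 := ne_of_gt (Real.sin_pos_of_pos_of_lt_pi h1 (by linarith [Real.pi_pos]))
  have hc : Real.cos η ≠ 0 := ne_of_gt (Real.cos_pos_of_mem_Ioo ⟨by linarith [Real.pi_pos], h2⟩)
  have hα' : α ≠ 0 := ne_of_gt hα
  have K22 : secondFF α 0 2 2 η = α ^ 2 * (Real.sin η * Real.cos η) := by
    simp [secondFF, _root_.Gamma, Dpart, metricComp, diagEntry, Fin.sum_univ_four, d2', d3', dconst']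
    field_simp
  have K33 : secondFF α 0 3 3 η = -(Real.sin η * Real.cos η) := by
    simp [secondFF, _root_.Gamma, Dpart, metricComp, diagEntry, Fin.sum_univ_four, d2', d3', dconst']
    field_simp
  have K23 : secondFF α 0 2 3 η = 0 := by
    simp [secondFF, _root_.Gamma, Dpart, metricComp, diagEntry, Fin.sum_univ_four, d2', d3', dconst']
  have K32 : secondFF α 0 3 2 η = 0 := by
    simp [secondFF, _root_.Gamma, Dpart, metricComp, diagEntry, Fin.sum_univ_four, d2', d3', dconst']
  refine ⟨?_, ?_⟩
  · have hm : meanCurv α 0 η = Real.cos η / Real.sin η - Real.sin η / Real.cos η := by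
      simp [meanCurv, hUp, diagEntry, Fin.sum_univ_four, K22, K33]
      field_simp
      ring
    rw [hm]
    rw [show (∑ a : Fin 4, ∑ b : Fin 4, ∑ c : Fin 4, ∑ d : Fin 4,
          hUp α a c η * hUp α b d η * secondFF α 0 a b η * secondFF α 0 c d η)
        = (Real.cos η / Real.sin η) ^ 2 + (Real.sin η / Real.cos η) ^ 2 from ?_]
    · field_simp
      ring
    · simp [hUp, diagEntry, Fin.sum_univ_four, K22, K33, K23, K32]
      field_simp
  · intro a b
    fin_cases a <;> fin_cases b <;>
      simp [secondFF, _root_.Gamma, Dpart, metricComp, diagEntry, Fin.sum_univ_four, dconst', dzero', d2', d3']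

end
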